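/- For n ≥ 1, the Bernoulli number B_n is recovered from the modified Bernoulli numbers via B_n = 2n * sum_{k=1}^{n} (-1)^{n+k} [C(2n-1, n-k) - C(2n-1, n-k-1)] B*_k + 2(-1)^n C(2n-1, n). -/

import Mathlib

open Finset

/-- The modified Bernoulli numbers of Zagier. -/
noncomputable def zagierBstar (n : ℕ) : ℚ :=
  ∑ r ∈ Finset.range (n + 1), ((n + r).choose (2 * r) : ℚ) * bernoulli r / (n + r)

/-- Binomial coefficient with integer lower index, zero when the lower index is negative. -/
def intChoose (a : ℕ) (b : ℤ) : ℚ :=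
  if 0 ≤ b then (a.choose b.toNat : ℚ) else 0


open Polynomial in
lemma taylor_one_leadingCoeff (P : ℚ[X]) : (taylor 1 P).leadingCoeff = P.leadingCoeff := by
  unfold Polynomial.leadingCoeff
  rw [natDegree_taylor, taylor_coeff]
  have h0 : (hasseDeriv P.natDegree P).natDegree = 0 :=
    Nat.le_antisymm (le_trans (natDegree_hasseDeriv_le _ _) (by omega)) (Nat.zero_le _)
  obtain ⟨a, ha⟩ := Polynomial.natDegree_eq_zero.mp h0
  have : a = (hasseDeriv P.natDegree P).coeff 0 := by rw [← ha]; simp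
  rw [← ha, eval_C, this, hasseDeriv_coeff, zero_add, Nat.choose_self, Nat.cast_one, one_mul]

open Polynomial in
lemma fd (N : ℕ) (P : ℚ[X]) (h : P.degree < N) :
    ∑ j ∈ range (N + 1), (-1 : ℚ) ^ j * (N.choose j : ℚ) * P.eval (j : ℚ) = 0 := by
  induction N generalizing P with
  | zero =>
    have : P = 0 := by
      by_contra hP
      have hd := Polynomial.degree_eq_natDegree hP
      rw [hd] at h
      exact absurd h (by exact_mod_cast not_lt.mpr (Nat.cast_le.mpr (Nat.zero_le _)))
    simp [this]
  | succ N ih =>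
    set R : ℚ[X] := P - taylor 1 P with hR
    have key : ∑ j ∈ range (N + 1 + 1), (-1 : ℚ) ^ j * ((N+1).choose j : ℚ) * P.eval (j:ℚ)
        = ∑ j ∈ range (N + 1), (-1 : ℚ) ^ j * (N.choose j : ℚ) * R.eval (j:ℚ) := by
      rw [Finset.sum_range_succ' _ (N+1)]
      have hsplit : ∀ j ∈ range (N + 1),
          (-1 : ℚ) ^ (j+1) * ((N+1).choose (j+1) : ℚ) * P.eval ((j+1 : ℕ):ℚ)
          = -((-1 : ℚ) ^ j * (N.choose j : ℚ) * P.eval ((j:ℚ)+1))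
            + (-1 : ℚ) ^ (j+1) * (N.choose (j+1) : ℚ) * P.eval ((j+1:ℕ):ℚ) := by
        intro j _
        rw [Nat.choose_succ_succ]
        push_cast
        ring
      rw [Finset.sum_congr rfl hsplit, Finset.sum_add_distrib]
      have h2 : ∑ j ∈ range (N + 1), (-1:ℚ)^(j+1) * (N.choose (j+1) : ℚ) * P.eval ((j+1:ℕ):ℚ)
            + (-1:ℚ)^0 * ((N+1).choose 0 : ℚ) * P.eval ((0:ℕ):ℚ)
          = ∑ j ∈ range (N + 1), (-1:ℚ)^j * (N.choose j : ℚ) * P.eval (j:ℚ) := by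
        rw [show ((N+1).choose 0) = N.choose 0 by simp]
        rw [← Finset.sum_range_succ' (fun j => (-1:ℚ)^j * (N.choose j : ℚ) * P.eval (j:ℚ)) (N+1)]
        rw [Finset.sum_range_succ]
        simp [Nat.choose_eq_zero_of_lt (Nat.lt_succ_self N)]
      rw [add_assoc, h2, ← Finset.sum_add_distrib]
      refine Finset.sum_congr rfl fun j _ => ?_
      have : R.eval (j:ℚ) = P.eval (j:ℚ) - P.eval ((j:ℚ)+1) := by
        simp [hR, taylor_eval]
      rw [this]; ring
    rw [key]
    apply ih
    by_cases hP : P = 0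
    · simp [hR, hP]
    by_cases hd : P.natDegree = 0
    · obtain ⟨a, ha⟩ := Polynomial.natDegree_eq_zero.mp hd
      have : R = 0 := by simp [hR, ← ha]
      rw [this]
      simp only [degree_zero]
      exact_mod_cast WithBot.bot_lt_coe N
    · have hdeg : R.degree < P.degree := by
        apply Polynomial.degree_sub_lt _ hP
        · exact (taylor_one_leadingCoeff P).symm
        · rw [Polynomial.degree_eq_natDegree hP,
            Polynomial.degree_eq_natDegree (fun h0 => hP ((map_eq_zero_iff _ (taylor_injective 1)).mp h0)),
            natDegree_taylor]
      calc R.degree < P.degree := hdeg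
        _ ≤ N := by
            have := h
            rw [Polynomial.degree_eq_natDegree hP] at this ⊢
            exact_mod_cast Nat.lt_succ_iff.mp (by exact_mod_cast this)

lemma alt_partial (N m : ℕ) :
    ∑ j ∈ range (m + 1), (-1 : ℚ) ^ j * ((N + 1).choose j : ℚ) = (-1) ^ m * (N.choose m : ℚ) := by
  induction m with
  | zero => simp
  | succ m ih =>
    rw [Finset.sum_range_succ, ih, Nat.choose_succ_succ]
    push_cast
    ring

lemma lemA1 (n k : ℕ) (h1 : 1 ≤ k) (h2 : k ≤ n) :
    (2 * n) * ((2 * n - 1).choose (n - k)) = (n + k) * ((2 * n).choose (n - k)) := by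
  have hsym : (2 * n - 1).choose (n - k) = (2 * n - 1).choose (n + k - 1) := by
    rw [← Nat.choose_symm (show n - k ≤ 2 * n - 1 by omega)]
    congr 1; omega
  have key := Nat.add_one_mul_choose_eq (2 * n - 1) (n + k - 1)
  rw [show 2 * n - 1 + 1 = 2 * n by omega,
    show n + k - 1 + 1 = n + k by omega] at key
  have hsym2 : (2 * n).choose (n + k) = (2 * n).choose (n - k) := by
    rw [← Nat.choose_symm (show n + k ≤ 2 * n by omega)]
    congr 1; omega
  rw [hsym, key, hsym2]; ring

lemma lemA2 (n k : ℕ) (h1 : 1 ≤ k) (h2 : k < n) :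
    (2 * n) * ((2 * n - 1).choose (n - k - 1)) = (n - k) * ((2 * n).choose (n - k)) := by
  have key := Nat.add_one_mul_choose_eq (2 * n - 1) (n - k - 1)
  rw [show 2 * n - 1 + 1 = 2 * n by omega,
    show n - k - 1 + 1 = n - k by omega] at key
  rw [key]; ring

-- (k+r) * C(k+r-1, 2r-1) = 2r * C(k+r, 2r) for k,r ≥ 1
lemma lemB (k r : ℕ) (hk : 1 ≤ k) (hr : 1 ≤ r) :
    (k + r) * ((k + r - 1).choose (2 * r - 1)) = 2 * r * ((k + r).choose (2 * r)) := by
  have key := Nat.add_one_mul_choose_eq (k + r - 1) (2 * r - 1)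
  rw [show k + r - 1 + 1 = k + r by omega,
    show 2 * r - 1 + 1 = 2 * r by omega] at key
  rw [key]; ring

open Polynomial in
noncomputable def Qpoly (n r : ℕ) : ℚ[X] :=
  Polynomial.C ((1:ℚ)/(2*r-1).factorial) *
    ((Polynomial.C (n:ℚ) - X) * ∏ i ∈ range (2*r-1), (Polynomial.C ((n:ℚ)+(r:ℚ)-1-(i:ℚ)) - X))

open Polynomial in
lemma Qpoly_eval (n r : ℕ) (x : ℚ) :
    (Qpoly n r).eval x = ((1:ℚ)/(2*r-1).factorial) *
      (((n:ℚ) - x) * ∏ i ∈ range (2*r-1), ((n:ℚ)+(r:ℚ)-1-(i:ℚ) - x)) := by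
  simp [Qpoly, eval_prod]

open Polynomial in
lemma Qpoly_natDegree_le (n r : ℕ) (hr : 1 ≤ r) : (Qpoly n r).natDegree ≤ 2 * r := by
  unfold Qpoly
  calc (Polynomial.C ((1:ℚ)/(2*r-1).factorial) *
      ((Polynomial.C (n:ℚ) - X) * ∏ i ∈ range (2*r-1), (Polynomial.C ((n:ℚ)+(r:ℚ)-1-(i:ℚ)) - X))).natDegree
      ≤ (Polynomial.C ((1:ℚ)/(2*r-1).factorial)).natDegree +
        ((Polynomial.C (n:ℚ) - X) * ∏ i ∈ range (2*r-1), (Polynomial.C ((n:ℚ)+(r:ℚ)-1-(i:ℚ)) - X)).natDegree :=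
        natDegree_mul_le
    _ ≤ 0 + ((Polynomial.C (n:ℚ) - X).natDegree +
        (∏ i ∈ range (2*r-1), (Polynomial.C ((n:ℚ)+(r:ℚ)-1-(i:ℚ)) - X)).natDegree) := by
        gcongr
        · simp
        · exact natDegree_mul_le
    _ ≤ 0 + (1 + ∑ i ∈ range (2*r-1), 1) := by
        gcongr
        · rw [show (Polynomial.C (n:ℚ) - X) = -(X - Polynomial.C (n:ℚ)) by ring,
            natDegree_neg, natDegree_X_sub_C]
        · refine le_trans (natDegree_prod_le _ _) ?_
          gcongr with i hi
          rw [show (Polynomial.C ((n:ℚ)+(r:ℚ)-1-(i:ℚ)) - X) = -(X - Polynomial.C ((n:ℚ)+(r:ℚ)-1-(i:ℚ))) by ring,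
            natDegree_neg, natDegree_X_sub_C]
    _ ≤ 2 * r := by
        rw [Finset.sum_const, card_range, smul_eq_mul, mul_one]
        omega

-- evaluation at n - k
open Polynomial in
lemma Qpoly_eval_sub (n r k : ℕ) (hr : 1 ≤ r) (hk : 1 ≤ k) (hkn : k ≤ n) :
    (Qpoly n r).eval ((n:ℚ) - k) = (k : ℚ) * ((k + r - 1).choose (2*r-1) : ℚ) := by
  rw [Qpoly_eval]
  rcases lt_or_ge k r with hlt | hge
  · -- k < r : both sides zero
    rw [Nat.choose_eq_zero_of_lt (by omega), Finset.prod_eq_zero (i := k + r - 1)]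
    · ring
    · exact Finset.mem_range.mpr (by omega)
    · rw [Nat.cast_sub (show 1 ≤ k + r by omega)]
      push_cast
      ring
  · -- k ≥ r : product is descFactorial
    have hprod : ∏ i ∈ range (2*r-1), ((n:ℚ)+(r:ℚ)-1-(i:ℚ) - ((n:ℚ) - k))
        = (((k + r - 1).descFactorial (2*r-1) : ℕ) : ℚ) := by
      rw [Nat.descFactorial_eq_prod_range]
      push_cast
      apply Finset.prod_congr rfl
      intro i hi
      rw [Finset.mem_range] at hi
      rw [Nat.cast_sub (by omega)]
      push_cast [show (1:ℕ) ≤ k + r by omega]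
      ring
    rw [hprod, Nat.descFactorial_eq_factorial_mul_choose]
    push_cast
    have hfac : ((2*r-1).factorial : ℚ) ≠ 0 := by positivity
    field_simp
    ring

lemma negpow (a b : ℕ) (h : a % 2 = b % 2) : (-1:ℚ)^a = (-1)^b := by
  rw [← Nat.div_add_mod a 2, ← Nat.div_add_mod b 2, pow_add, pow_add, pow_mul, pow_mul]
  simp [h]

open Polynomial in
lemma Qpoly_eval_self (n r : ℕ) : (Qpoly n r).eval (n:ℚ) = 0 := by
  rw [Qpoly_eval]; simp

open Polynomial in
lemma Qpoly_symm (n r k : ℕ) (hr : 1 ≤ r) :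
    (Qpoly n r).eval ((n:ℚ) + k) = (Qpoly n r).eval ((n:ℚ) - k) := by
  rw [Qpoly_eval, Qpoly_eval]
  have key : ∏ i ∈ range (2*r-1), ((n:ℚ)+(r:ℚ)-1-(i:ℚ) - ((n:ℚ)+k))
      = - ∏ i ∈ range (2*r-1), ((n:ℚ)+(r:ℚ)-1-(i:ℚ) - ((n:ℚ)-k)) := by
    rw [← Finset.prod_range_reflect (fun i => ((n:ℚ)+(r:ℚ)-1-(i:ℚ) - ((n:ℚ)+k))) (2*r-1)]
    have hcongr : ∀ i ∈ range (2*r-1),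
        ((n:ℚ)+(r:ℚ)-1-((2*r-1 - 1 - i : ℕ):ℚ) - ((n:ℚ)+(k:ℚ)))
        = -1 * ((n:ℚ)+(r:ℚ)-1-(i:ℚ) - ((n:ℚ)-k)) := by
      intro i hi
      rw [Finset.mem_range] at hi
      have h1 : (2*r-1-1-i) + (i + 2) = 2*r := by omega
      have h2 := congrArg (Nat.cast : ℕ → ℚ) h1
      push_cast at h2
      nlinarith [h2]
    rw [Finset.prod_congr rfl hcongr, Finset.prod_mul_distrib, Finset.prod_const]
    have : (-1:ℚ) ^ (range (2*r-1)).card = -1 := by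
      rw [card_range]
      rw [negpow (2*r-1) 1 (by omega)]
      simp
    rw [this]; ring
  rw [key]; ring

open Polynomial in
lemma main_lt (n r : ℕ) (hr : 1 ≤ r) (hrn : r < n) :
    ∑ k ∈ Icc 1 n, (-1:ℚ)^k * k * ((2*n).choose (n-k) : ℚ) * ((k+r-1).choose (2*r-1) : ℚ) = 0 := by
  set T : ℕ → ℚ := fun j => (-1:ℚ)^j * ((2*n).choose j : ℚ) * (Qpoly n r).eval (j:ℚ) with hT
  have hdeg : (Qpoly n r).degree < ((2*n : ℕ) : WithBot ℕ) := by
    refine lt_of_le_of_lt (Polynomial.degree_le_natDegree) ?_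
    exact_mod_cast lt_of_le_of_lt (Qpoly_natDegree_le n r hr) (by omega)
  have h0 : ∑ j ∈ range (2*n+1), T j = 0 := fd (2*n) (Qpoly n r) hdeg
  -- split the sum
  have hsplit : ∑ j ∈ range (2*n+1), T j
      = (∑ j ∈ range n, T j + T n) + ∑ j ∈ Ico (n+1) (2*n+1), T j := by
    rw [← Finset.sum_range_succ T n, Finset.range_eq_Ico, Finset.range_eq_Ico]
    exact (Finset.sum_Ico_consecutive T (m := 0) (n := n+1) (k := 2*n+1) (by omega) (by omega)).symm
  have hTn : T n = 0 := by simp [hT, Qpoly_eval_self]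
  have hhalf : ∑ j ∈ Ico (n+1) (2*n+1), T j = ∑ j ∈ range n, T j := by
    refine Finset.sum_nbij' (fun a => 2*n - a) (fun a => 2*n - a) ?_ ?_ ?_ ?_ ?_
    · intro a ha; rw [Finset.mem_Ico] at ha; show 2*n - a ∈ range n; rw [Finset.mem_range]; omega
    · intro a ha; rw [Finset.mem_range] at ha; show 2*n - a ∈ Ico (n+1) (2*n+1); rw [Finset.mem_Ico]; omega
    · intro a ha; rw [Finset.mem_Ico] at ha; show 2*n - (2*n - a) = a; omega
    · intro a ha; rw [Finset.mem_range] at ha; show 2*n - (2*n - a) = a; omega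
    · intro a ha
      rw [Finset.mem_Ico] at ha
      simp only [hT]
      have hch : (2*n).choose (2*n - a) = (2*n).choose a := Nat.choose_symm (by omega)
      have hpow : (-1:ℚ)^(2*n-a) = (-1)^a := negpow _ _ (by omega)
      have hc1 : ((2*n - a : ℕ) : ℚ) = (n:ℚ) - ((a - n : ℕ) : ℚ) := by
        have h1 : (2*n - a) + a = 2*n := by omega
        have h2 : (a - n) + n = a := by omega
        have := congrArg (Nat.cast : ℕ → ℚ) h1
        have := congrArg (Nat.cast : ℕ → ℚ) h2
        push_cast at *
        linarith
      have hc2 : ((a : ℕ) : ℚ) = (n:ℚ) + ((a - n : ℕ) : ℚ) := by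
        have h2 : (a - n) + n = a := by omega
        have := congrArg (Nat.cast : ℕ → ℚ) h2
        push_cast at *
        linarith
      rw [hch, hpow, hc1, hc2, Qpoly_symm n r (a - n) hr]
  have hsum0 : ∑ j ∈ range n, T j = 0 := by
    rw [hsplit, hTn, hhalf] at h0
    linarith
  -- relate to the goal
  have hrel : ∑ j ∈ range n, T j
      = (-1:ℚ)^n * ∑ k ∈ Icc 1 n, (-1:ℚ)^k * k * ((2*n).choose (n-k) : ℚ) * ((k+r-1).choose (2*r-1) : ℚ) := by
    rw [Finset.mul_sum]
    refine (Finset.sum_nbij' (fun j => n - j) (fun k => n - k) ?_ ?_ ?_ ?_ ?_)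
    · intro a ha; rw [Finset.mem_range] at ha; show n - a ∈ Icc 1 n; rw [Finset.mem_Icc]; omega
    · intro a ha; rw [Finset.mem_Icc] at ha; show n - a ∈ range n; rw [Finset.mem_range]; omega
    · intro a ha; rw [Finset.mem_range] at ha; show n - (n - a) = a; omega
    · intro a ha; rw [Finset.mem_Icc] at ha; show n - (n - a) = a; omega
    · intro j hj
      rw [Finset.mem_range] at hj
      simp only [hT]
      set k := n - j with hk
      have hj' : j = n - k := by omega
      have hc3 : ((j : ℕ) : ℚ) = (n:ℚ) - (k : ℚ) := by
        have h2 : k + j = n := by omega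
        have := congrArg (Nat.cast : ℕ → ℚ) h2
        push_cast at this
        linarith
      rw [hc3, Qpoly_eval_sub n r k hr (by omega) (by omega)]
      rw [hj', negpow (n - k) (n + k) (by omega), pow_add]
      ring
  rw [hrel] at hsum0
  rcases mul_eq_zero.mp hsum0 with h | h
  · exact absurd h (by positivity)
  · exact h

lemma main_eq (n : ℕ) (hn : 1 ≤ n) :
    ∑ k ∈ Icc 1 n, (-1:ℚ)^k * k * ((2*n).choose (n-k) : ℚ) * ((k+n-1).choose (2*n-1) : ℚ)
      = (-1:ℚ)^n * n := by
  rw [Finset.sum_eq_single n]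
  · rw [Nat.sub_self, Nat.choose_zero_right, show n + n - 1 = 2*n-1 by omega, Nat.choose_self]
    push_cast; ring
  · intro k hk hkn
    rw [Finset.mem_Icc] at hk
    rw [Nat.choose_eq_zero_of_lt (show k + n - 1 < 2*n - 1 by omega)]
    ring
  · intro h
    exact absurd (Finset.mem_Icc.mpr ⟨hn, le_refl n⟩) h

lemma sumD (n : ℕ) (hn : 1 ≤ n) :
    ∑ k ∈ Icc 1 n, (-1:ℚ)^k * ((2*n).choose (n-k) : ℚ) = -(((2*n-1).choose n : ℕ) : ℚ) := by
  have hrw : ∑ k ∈ Icc 1 n, (-1:ℚ)^k * ((2*n).choose (n-k) : ℚ)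
      = ∑ j ∈ range n, (-1:ℚ)^(n-j) * ((2*n).choose j : ℚ) := by
    refine (Finset.sum_nbij' (fun k => n - k) (fun j => n - j) ?_ ?_ ?_ ?_ ?_)
    · intro a ha; rw [Finset.mem_Icc] at ha; show n - a ∈ range n; rw [Finset.mem_range]; omega
    · intro a ha; rw [Finset.mem_range] at ha; show n - a ∈ Icc 1 n; rw [Finset.mem_Icc]; omega
    · intro a ha; rw [Finset.mem_Icc] at ha; show n - (n - a) = a; omega
    · intro a ha; rw [Finset.mem_range] at ha; show n - (n - a) = a; omega
    · intro a ha
      rw [Finset.mem_Icc] at ha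
      show (-1:ℚ)^a * ((2*n).choose (n-a) : ℚ) = (-1:ℚ)^(n - (n-a)) * ((2*n).choose (n-a) : ℚ)
      rw [negpow (n - (n-a)) a (by omega)]
  rw [hrw]
  have hterm : ∀ j ∈ range n, (-1:ℚ)^(n-j) * ((2*n).choose j : ℚ)
      = (-1:ℚ)^n * ((-1:ℚ)^j * ((2*n).choose j : ℚ)) := by
    intro j hj
    rw [Finset.mem_range] at hj
    rw [negpow (n-j) (n+j) (by omega), pow_add]
    ring
  rw [Finset.sum_congr rfl hterm, ← Finset.mul_sum]
  have := alt_partial (2*n-1) (n-1)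
  rw [show 2*n-1+1 = 2*n by omega, show n-1+1 = n by omega] at this
  rw [this]
  have hsym : (2*n-1).choose (n-1) = (2*n-1).choose n := by
    rw [← Nat.choose_symm (show n ≤ 2*n-1 by omega)]
    congr 1; omega
  rw [hsym]
  have hmul : (-1:ℚ)^n * (-1:ℚ)^(n-1) = -1 := by
    rw [← pow_add, negpow (n + (n-1)) 1 (by omega)]; simp
  rw [← mul_assoc, hmul]
  ring

lemma lemD (n k : ℕ) (hn : 1 ≤ n) (h1 : 1 ≤ k) (h2 : k ≤ n) :
    intChoose (2*n-1) ((n:ℤ) - k) - intChoose (2*n-1) ((n:ℤ) - k - 1)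
      = (k:ℚ)/(n:ℚ) * (((2*n).choose (n-k) : ℕ) : ℚ) := by
  have hn0 : (n:ℚ) ≠ 0 := Nat.cast_ne_zero.mpr (by omega)
  unfold intChoose
  rcases eq_or_lt_of_le h2 with heq | hlt
  · subst heq
    rw [if_pos (by omega), if_neg (by omega)]
    rw [show ((k:ℤ) - k).toNat = 0 by omega, Nat.sub_self, Nat.choose_zero_right,
      Nat.choose_zero_right]
    field_simp
    simp
  · rw [if_pos (by omega), if_pos (by omega)]
    rw [show ((n:ℤ) - k).toNat = n - k by omega, show ((n:ℤ) - k - 1).toNat = n - k - 1 by omega]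
    have hA1 := lemA1 n k h1 h2
    have hA2 := lemA2 n k h1 hlt
    have hA1' : (2*(n:ℚ)) * (((2*n-1).choose (n-k) : ℕ) : ℚ)
        = ((n:ℚ) + k) * (((2*n).choose (n-k) : ℕ) : ℚ) := by exact_mod_cast hA1
    have hA2' : (2*(n:ℚ)) * (((2*n-1).choose (n-k-1) : ℕ) : ℚ)
        = ((n:ℚ) - k) * (((2*n).choose (n-k) : ℕ) : ℚ) := by
      have : ((n - k : ℕ) : ℚ) = (n:ℚ) - k := by
        rw [Nat.cast_sub (by omega)]
      rw [← this]
      exact_mod_cast hA2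
    have h2n : (2*(n:ℚ)) ≠ 0 := by positivity
    field_simp
    nlinarith [hA1', hA2']

theorem bernoulli_inversion (n : ℕ) (hn : 1 ≤ n) :
    bernoulli n =
      2 * n * ∑ k ∈ Finset.Icc 1 n, (-1 : ℚ) ^ (n + k) *
        (intChoose (2 * n - 1) ((n : ℤ) - k) - intChoose (2 * n - 1) ((n : ℤ) - k - 1)) *
        zagierBstar k
      + 2 * (-1 : ℚ) ^ n * ((2 * n - 1).choose n : ℚ) := by
  have hn0 : (n:ℚ) ≠ 0 := Nat.cast_ne_zero.mpr (by omega)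
  set F : ℕ → ℚ := fun r => ∑ k ∈ Icc 1 n,
      (-1:ℚ)^(n+k) * ((k:ℚ)/(n:ℚ) * (((2*n).choose (n-k) : ℕ):ℚ)) *
        ((((k+r).choose (2*r) : ℕ):ℚ) * bernoulli r / ((k:ℚ)+(r:ℚ))) with hF
  -- Step 1: rewrite the main sum as ∑ r, F r
  have step1 : ∑ k ∈ Finset.Icc 1 n, (-1 : ℚ) ^ (n + k) *
        (intChoose (2 * n - 1) ((n : ℤ) - k) - intChoose (2 * n - 1) ((n : ℤ) - k - 1)) *
        zagierBstar k
      = ∑ r ∈ range (n+1), F r := by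
    simp only [hF]
    rw [Finset.sum_comm]
    apply Finset.sum_congr rfl
    intro k hk
    rw [Finset.mem_Icc] at hk
    rw [lemD n k hn hk.1 hk.2]
    have hzag : zagierBstar k = ∑ r ∈ range (n+1),
        (((k+r).choose (2*r) : ℕ):ℚ) * bernoulli r / ((k:ℚ)+(r:ℚ)) := by
      unfold zagierBstar
      rw [Finset.sum_subset (Finset.range_subset_range.mpr (show k+1 ≤ n+1 by omega))]
      · intro r _ hr
        rw [Finset.mem_range, not_lt] at hr
        rw [Nat.choose_eq_zero_of_lt (show k + r < 2*r by omega)]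
        simp
    rw [hzag, Finset.mul_sum]
  rw [step1, Finset.sum_range_succ]
  -- F at r = n
  have hFn : F n = bernoulli n / (2*(n:ℚ)) := by
    simp only [hF]
    have hterm : ∀ k ∈ Icc 1 n,
        (-1:ℚ)^(n+k) * ((k:ℚ)/(n:ℚ) * (((2*n).choose (n-k) : ℕ):ℚ)) *
          ((((k+n).choose (2*n) : ℕ):ℚ) * bernoulli n / ((k:ℚ)+(n:ℚ)))
        = ((-1:ℚ)^n * bernoulli n/(2*(n:ℚ)*(n:ℚ))) *
          ((-1:ℚ)^k * (k:ℚ) * (((2*n).choose (n-k) : ℕ):ℚ) * (((k+n-1).choose (2*n-1) : ℕ):ℚ)) := by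
      intro k hk
      rw [Finset.mem_Icc] at hk
      have hkr : ((k:ℚ)+(n:ℚ)) ≠ 0 := by positivity
      have hdiv : (((k+n).choose (2*n) : ℕ):ℚ) / ((k:ℚ)+(n:ℚ))
          = (((k+n-1).choose (2*n-1) : ℕ):ℚ) / (2*(n:ℚ)) := by
        rw [div_eq_div_iff hkr (by positivity)]
        have thisQ : ((k:ℚ)+(n:ℚ)) * (((k+n-1).choose (2*n-1) : ℕ):ℚ)
            = 2*(n:ℚ)*(((k+n).choose (2*n) : ℕ):ℚ) := by exact_mod_cast lemB k n hk.1 hn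
        linear_combination -thisQ
      calc (-1:ℚ)^(n+k) * ((k:ℚ)/(n:ℚ) * (((2*n).choose (n-k) : ℕ):ℚ)) *
          ((((k+n).choose (2*n) : ℕ):ℚ) * bernoulli n / ((k:ℚ)+(n:ℚ)))
          = ((-1:ℚ)^(n+k) * ((k:ℚ)/(n:ℚ) * (((2*n).choose (n-k) : ℕ):ℚ)) * bernoulli n) *
            ((((k+n).choose (2*n) : ℕ):ℚ) / ((k:ℚ)+(n:ℚ))) := by ring
        _ = ((-1:ℚ)^(n+k) * ((k:ℚ)/(n:ℚ) * (((2*n).choose (n-k) : ℕ):ℚ)) * bernoulli n) *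
            ((((k+n-1).choose (2*n-1) : ℕ):ℚ) / (2*(n:ℚ))) := by rw [hdiv]
        _ = ((-1:ℚ)^n * bernoulli n/(2*(n:ℚ)*(n:ℚ))) *
            ((-1:ℚ)^k * (k:ℚ) * (((2*n).choose (n-k) : ℕ):ℚ) * (((k+n-1).choose (2*n-1) : ℕ):ℚ)) := by
            rw [pow_add]; ring
    rw [Finset.sum_congr rfl hterm, ← Finset.mul_sum, main_eq n hn]
    have hsq : (-1:ℚ)^n * (-1:ℚ)^n = 1 := by
      rw [← pow_add, negpow (n+n) 0 (by omega), pow_zero]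
    have h1 : ((-1:ℚ)^n * bernoulli n/(2*(n:ℚ)*(n:ℚ))) * ((-1:ℚ)^n * (n:ℚ))
        = ((-1:ℚ)^n * (-1:ℚ)^n) * (bernoulli n * ((n:ℚ)/(2*(n:ℚ)*(n:ℚ)))) := by ring
    rw [h1, hsq, one_mul, show (n:ℚ)/(2*(n:ℚ)*(n:ℚ)) = 1/(2*(n:ℚ)) from by
      rw [div_eq_div_iff (by positivity) (by positivity)]; ring]
    ring
  -- F at 1 ≤ r < n
  have hFr : ∀ r, 1 ≤ r → r < n → F r = 0 := by
    intro r hr hrn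
    simp only [hF]
    have hterm : ∀ k ∈ Icc 1 n,
        (-1:ℚ)^(n+k) * ((k:ℚ)/(n:ℚ) * (((2*n).choose (n-k) : ℕ):ℚ)) *
          ((((k+r).choose (2*r) : ℕ):ℚ) * bernoulli r / ((k:ℚ)+(r:ℚ)))
        = ((-1:ℚ)^n * bernoulli r/(2*(r:ℚ)*(n:ℚ))) *
          ((-1:ℚ)^k * (k:ℚ) * (((2*n).choose (n-k) : ℕ):ℚ) * (((k+r-1).choose (2*r-1) : ℕ):ℚ)) := by
      intro k hk
      rw [Finset.mem_Icc] at hk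
      have hkr : ((k:ℚ)+(r:ℚ)) ≠ 0 := by positivity
      have hdiv : (((k+r).choose (2*r) : ℕ):ℚ) / ((k:ℚ)+(r:ℚ))
          = (((k+r-1).choose (2*r-1) : ℕ):ℚ) / (2*(r:ℚ)) := by
        rw [div_eq_div_iff hkr (by positivity)]
        have thisQ : ((k:ℚ)+(r:ℚ)) * (((k+r-1).choose (2*r-1) : ℕ):ℚ)
            = 2*(r:ℚ)*(((k+r).choose (2*r) : ℕ):ℚ) := by exact_mod_cast lemB k r hk.1 hr
        linear_combination -thisQ
      calc (-1:ℚ)^(n+k) * ((k:ℚ)/(n:ℚ) * (((2*n).choose (n-k) : ℕ):ℚ)) *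
          ((((k+r).choose (2*r) : ℕ):ℚ) * bernoulli r / ((k:ℚ)+(r:ℚ)))
          = ((-1:ℚ)^(n+k) * ((k:ℚ)/(n:ℚ) * (((2*n).choose (n-k) : ℕ):ℚ)) * bernoulli r) *
            ((((k+r).choose (2*r) : ℕ):ℚ) / ((k:ℚ)+(r:ℚ))) := by ring
        _ = ((-1:ℚ)^(n+k) * ((k:ℚ)/(n:ℚ) * (((2*n).choose (n-k) : ℕ):ℚ)) * bernoulli r) *
            ((((k+r-1).choose (2*r-1) : ℕ):ℚ) / (2*(r:ℚ))) := by rw [hdiv]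
        _ = ((-1:ℚ)^n * bernoulli r/(2*(r:ℚ)*(n:ℚ))) *
            ((-1:ℚ)^k * (k:ℚ) * (((2*n).choose (n-k) : ℕ):ℚ) * (((k+r-1).choose (2*r-1) : ℕ):ℚ)) := by
            rw [pow_add]; ring
    rw [Finset.sum_congr rfl hterm, ← Finset.mul_sum, main_lt n r hr hrn, mul_zero]
  -- F at 0
  have hF0 : F 0 = (-1:ℚ)^n * (1/(n:ℚ)) * (-(((2*n-1).choose n : ℕ):ℚ)) := by
    simp only [hF]
    have hterm : ∀ k ∈ Icc 1 n,
        (-1:ℚ)^(n+k) * ((k:ℚ)/(n:ℚ) * (((2*n).choose (n-k) : ℕ):ℚ)) *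
          ((((k+0).choose (2*0) : ℕ):ℚ) * bernoulli 0 / ((k:ℚ)+((0:ℕ):ℚ)))
        = ((-1:ℚ)^n * (1/(n:ℚ))) * ((-1:ℚ)^k * (((2*n).choose (n-k) : ℕ):ℚ)) := by
      intro k hk
      rw [Finset.mem_Icc] at hk
      have hk0 : (k:ℚ) ≠ 0 := Nat.cast_ne_zero.mpr (by omega)
      simp only [Nat.mul_zero, Nat.add_zero, Nat.choose_zero_right, Nat.cast_one, bernoulli_zero,
        add_zero, one_mul, pow_add]
      field_simp
      ring
    rw [Finset.sum_congr rfl hterm, ← Finset.mul_sum, sumD n hn]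
  -- collapse ∑ r ∈ range n, F r to F 0
  have hrest : ∑ r ∈ range n, F r = F 0 := by
    apply Finset.sum_eq_single_of_mem 0 (Finset.mem_range.mpr (by omega))
    intro r hr hr0
    rw [Finset.mem_range] at hr
    exact hFr r (by omega) hr
  rw [hrest, hFn, hF0]
  field_simp
  ring
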